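/- Let k be an algebraically closed field of characteristic ≠ 2 and let α = [α₁, α₂, α₃] ∈ k³ be a nonzero row vector. Then there exists an invertible 3×3 matrix A = (a_ij) over k such that the matrix B with rows (a₂₃, a₁₃, a₃₃), (a₂₂, a₁₂, a₃₂), (a₂₁, a₁₁, a₃₁) satisfies B·A = c·P for some nonzero c ∈ k, where P is the cyclic permutation matrix with rows (0,0,1), (1,0,0), (0,1,0), and moreover α·A = [1,0,0] or α·A = [0,0,1]. -/

import Mathlib

section aux

open Matrix

variable {k : Type*} [Field k]

private def simA (u v w z t : k) : Matrix (Fin 3) (Fin 3) k :=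
  Matrix.of ![![2*t*u^2, -(4*t*v^2), 4*t*u*v],
              ![-(t*w^2), 2*t*z^2, -(2*t*w*z)],
              ![2*t*u*w, -(4*t*v*z), 2*t*(u*z+v*w)]]

private lemma simA_mul (u v w z t : k) :
    (Matrix.of ![![simA u v w z t 1 2, simA u v w z t 0 2, simA u v w z t 2 2],
                 ![simA u v w z t 1 1, simA u v w z t 0 1, simA u v w z t 2 1],
                 ![simA u v w z t 1 0, simA u v w z t 0 0, simA u v w z t 2 0]]) *
        simA u v w z t =
      (4*t^2*(u*z-v*w)^2) • (Matrix.of ![![(0 : k), 0, 1], ![1, 0, 0], ![0, 1, 0]]) := by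
  ext i j
  fin_cases i <;> fin_cases j <;>
    simp [simA, Matrix.mul_apply, Fin.sum_univ_succ, Matrix.smul_apply,
      Matrix.vecHead, Matrix.vecTail] <;> ring

private lemma unit_of_eq {A B : Matrix (Fin 3) (Fin 3) k} {c : k} (hc : c ≠ 0)
    (h : B * A = c • (Matrix.of ![![(0 : k), 0, 1], ![1, 0, 0], ![0, 1, 0]])) :
    IsUnit A := by
  have hPP : (Matrix.of ![![(0 : k), 0, 1], ![1, 0, 0], ![0, 1, 0]])ᵀ *
      (Matrix.of ![![(0 : k), 0, 1], ![1, 0, 0], ![0, 1, 0]]) = 1 := by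
    ext i j
    fin_cases i <;> fin_cases j <;>
      simp [Matrix.mul_apply, Fin.sum_univ_succ, Matrix.one_apply,
        Matrix.vecHead, Matrix.vecTail]
  have hleft : (c⁻¹ • ((Matrix.of ![![(0 : k), 0, 1], ![1, 0, 0], ![0, 1, 0]])ᵀ * B)) * A
      = 1 := by
    rw [Matrix.smul_mul, Matrix.mul_assoc, h, Matrix.mul_smul, hPP, smul_smul,
      inv_mul_cancel₀ hc, one_smul]
  exact (Matrix.isUnit_iff_isUnit_det A).mpr (Matrix.isUnit_det_of_left_inverse hleft)

private lemma vecMul_simA (α : Fin 3 → k) (u v w z t : k) :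
    Matrix.vecMul α (simA u v w z t) =
      ![α 0 * (2*t*u^2) + α 1 * (-(t*w^2)) + α 2 * (2*t*u*w),
        α 0 * (-(4*t*v^2)) + α 1 * (2*t*z^2) + α 2 * (-(4*t*v*z)),
        α 0 * (4*t*u*v) + α 1 * (-(2*t*w*z)) + α 2 * (2*t*(u*z+v*w))] := by
  funext j
  fin_cases j <;>
    simp [simA, Matrix.vecMul, dotProduct, Fin.sum_univ_succ] <;> ring

end aux

set_option maxHeartbeats 1000000 in
theorem stmt_19 {k : Type*} [Field k] [IsAlgClosed k] (hchar : (2 : k) ≠ 0)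
    (α : Fin 3 → k) (hα : α ≠ 0) :
    ∃ A : Matrix (Fin 3) (Fin 3) k, IsUnit A ∧
      ∃ c : k, c ≠ 0 ∧
        (Matrix.of ![![A 1 2, A 0 2, A 2 2],
                     ![A 1 1, A 0 1, A 2 1],
                     ![A 1 0, A 0 0, A 2 0]]) * A =
          c • (Matrix.of ![![(0 : k), 0, 1], ![1, 0, 0], ![0, 1, 0]]) ∧
        (Matrix.vecMul α A = ![1, 0, 0] ∨ Matrix.vecMul α A = ![0, 0, 1]) := by
  have h4 : (4 : k) ≠ 0 := by
    have : (4 : k) = 2 * 2 := by norm_num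
    rw [this]; exact mul_ne_zero hchar hchar
  set a := α 0 with ha0
  set b := α 1 with hb0
  set d := α 2 with hd0
  have key : ∀ u v w z t : k, t ≠ 0 → u*z - v*w ≠ 0 →
      (IsUnit (simA u v w z t) ∧ ∃ c : k, c ≠ 0 ∧
          (Matrix.of ![![simA u v w z t 1 2, simA u v w z t 0 2, simA u v w z t 2 2],
                       ![simA u v w z t 1 1, simA u v w z t 0 1, simA u v w z t 2 1],
                       ![simA u v w z t 1 0, simA u v w z t 0 0, simA u v w z t 2 0]])
            * simA u v w z t =
            c • (Matrix.of ![![(0 : k), 0, 1], ![1, 0, 0], ![0, 1, 0]])) := by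
    intro u v w z t ht hdet
    have hc : (4*t^2*(u*z-v*w)^2 : k) ≠ 0 :=
      mul_ne_zero (mul_ne_zero h4 (pow_ne_zero _ ht)) (pow_ne_zero _ hdet)
    exact ⟨unit_of_eq hc (simA_mul u v w z t), ⟨_, hc, simA_mul u v w z t⟩⟩
  by_cases haz : a = 0
  · by_cases hdz : d = 0
    · -- a = 0, d = 0, b ≠ 0 : target e₀
      have hb : b ≠ 0 := by
        intro hb
        apply hα; funext i; fin_cases i <;> simp [← ha0, ← hb0, ← hd0, haz, hb, hdz]
      obtain ⟨hu, c, hc, heq⟩ := key 0 1 1 0 (-b⁻¹)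
        (by simpa using inv_ne_zero hb) (by norm_num)
      refine ⟨_, hu, c, hc, heq, Or.inl ?_⟩
      rw [vecMul_simA]
      funext j
      fin_cases j
      · show a * _ + b * _ + d * _ = 1
        rw [haz, hdz]; field_simp
        try ring
      · show a * _ + b * _ + d * _ = 0
        rw [haz, hdz]; ring
      · show a * _ + b * _ + d * _ = 0
        rw [haz, hdz]; ring
    · -- a = 0, d ≠ 0 : target e₂
      obtain ⟨hu, c, hc, heq⟩ := key 1 (b/(2*d)) 0 1 ((2*d)⁻¹)
        (inv_ne_zero (mul_ne_zero hchar hdz)) (by norm_num)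
      refine ⟨_, hu, c, hc, heq, Or.inr ?_⟩
      rw [vecMul_simA]
      funext j
      fin_cases j
      · show a * _ + b * _ + d * _ = 0
        rw [haz]; ring
      · show a * _ + b * _ + d * _ = 0
        rw [haz]; field_simp; ring
      · show a * _ + b * _ + d * _ = 1
        rw [haz]; field_simp; ring
  · by_cases hD : d^2 + 2*a*b = 0
    · -- a ≠ 0, discriminant 0 : target e₀
      obtain ⟨hu, c, hc, heq⟩ := key 1 (-d/(2*a)) 0 1 ((2*a)⁻¹)
        (inv_ne_zero (mul_ne_zero hchar haz)) (by norm_num)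
      refine ⟨_, hu, c, hc, heq, Or.inl ?_⟩
      rw [vecMul_simA]
      funext j
      have hb' : b = -(d^2)/(2*a) := by
        field_simp
        linear_combination hD
      fin_cases j
      · show a * _ + b * _ + d * _ = 1
        rw [hb']; field_simp
        try ring
      · show a * _ + b * _ + d * _ = 0
        rw [hb']; field_simp; ring
      · show a * _ + b * _ + d * _ = 0
        rw [hb']; field_simp; ring
    · -- a ≠ 0, discriminant ≠ 0 : target e₂
      obtain ⟨s, hs⟩ := IsAlgClosed.exists_pow_nat_eq (d^2 + 2*a*b) (n := 2) (by norm_num)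
      have hsne : s ≠ 0 := by
        intro h; apply hD; rw [← hs, h]; ring
      have hdet : (-d+s)*(2*a) - (-d-s)*(2*a) ≠ 0 := by
        have e : (-d+s)*(2*a) - (-d-s)*(2*a) = 2*(2*(s*a)) := by ring
        rw [e]
        exact mul_ne_zero hchar (mul_ne_zero hchar (mul_ne_zero hsne haz))
      have ht : (-(8*a*s^2)⁻¹ : k) ≠ 0 := by
        have h8 : (8:k) ≠ 0 := by
          have e : (8:k) = 2^3 := by norm_num
          rw [e]; exact pow_ne_zero 3 hchar
        exact neg_ne_zero.mpr (inv_ne_zero (mul_ne_zero (mul_ne_zero h8 haz)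
          (pow_ne_zero 2 hsne)))
      obtain ⟨hu, c, hc, heq⟩ := key (-d+s) (-d-s) (2*a) (2*a) (-(8*a*s^2)⁻¹) ht hdet
      refine ⟨_, hu, c, hc, heq, Or.inr ?_⟩
      have he : (8*a*s^2) * (8*a*s^2)⁻¹ = 1 := by
        refine mul_inv_cancel₀ ?_
        have h8 : (8:k) ≠ 0 := by
          have e : (8:k) = 2^3 := by norm_num
          rw [e]; exact pow_ne_zero 3 hchar
        exact mul_ne_zero (mul_ne_zero h8 haz) (pow_ne_zero 2 hsne)
      rw [vecMul_simA]
      funext j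
      fin_cases j
      · show a * _ + b * _ + d * _ = 0
        linear_combination (-(2*a) * (8*a*s^2)⁻¹) * hs
      · show a * _ + b * _ + d * _ = 0
        linear_combination ((4*a) * (8*a*s^2)⁻¹) * hs
      · show a * _ + b * _ + d * _ = 1
        linear_combination he + (-(4*a) * (8*a*s^2)⁻¹) * hs
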